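/- arXiv:0803.2205 — 8 statements merged into one kernel-verified Lean document; each statement's English description precedes it below -/
import Mathlib

section
/- Let L be a right Bol loop such that for all x, y ∈ L, either xy = yx or x⁻¹(xy) = y. Then L satisfies the left inverse property x⁻¹(xy) = y for all x, y, and hence L is a Moufang loop. -/
/-- A right Bol loop in which every pair of elements commutes or satisfies the
left inverse property is a left inverse property loop, hence Moufang. -/
theorem stmt_5 {L : Type*} [Mul L] [One L] [Inv L]
    (h1 : ∀ a : L, 1 * a = a) (h2 : ∀ a : L, a * 1 = a)
    (hld : ∀ a b : L, ∃! x : L, a * x = b) (hrd : ∀ a b : L, ∃! y : L, y * a = b)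
    (hinvr : ∀ a : L, a * a⁻¹ = 1) (hinvl : ∀ a : L, a⁻¹ * a = 1)
    (bol : ∀ x y z : L, ((x * y) * z) * y = x * ((y * z) * y))
    (hyp : ∀ x y : L, x * y = y * x ∨ x⁻¹ * (x * y) = y) :
    (∀ x y : L, x⁻¹ * (x * y) = y) ∧
      (∀ x y z : L, ((x * y) * z) * y = x * (y * (z * y))) := by
  have rcancel : ∀ a b c : L, b * a = c * a → b = c := by
    intro a b c h
    obtain ⟨y, hy, hu⟩ := hrd a (c * a)
    rw [hu b h, hu c rfl]
  have lcancel : ∀ a b c : L, a * b = a * c → b = c := by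
    intro a b c h
    obtain ⟨y, hy, hu⟩ := hld a (a * c)
    rw [hu b h, hu c rfl]
  have rip : ∀ a b : L, (a * b) * b⁻¹ = a := by
    intro a b
    apply rcancel b
    have := bol a b b⁻¹
    rw [hinvr, h1] at this
    exact this
  have inv_inv : ∀ a : L, a⁻¹⁻¹ = a := by
    intro a
    apply rcancel a⁻¹
    rw [hinvl, hinvr]
  have lip : ∀ x y : L, x⁻¹ * (x * y) = y := by
    intro x y
    rcases hyp x y with hc | hl
    · rcases hyp x⁻¹ (y * x) with hc2 | hl2
      · rw [hc, hc2, rip]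
      · rw [inv_inv] at hl2
        rw [hc]
        exact lcancel x _ _ (by rw [hl2, hc])
    · exact hl
  have flex : ∀ y z : L, (y * z) * y = y * (z * y) := by
    intro y z
    have hb := bol y⁻¹ y z
    rw [hinvl, h1] at hb
    have hl2 := lip y⁻¹ ((y * z) * y)
    rw [inv_inv] at hl2
    rw [hb, hl2]
  exact ⟨lip, fun x y z => by rw [bol, flex]⟩
end

section
/- Let L be a right Bol loop such that for all x, y, z ∈ L, either D'(x,y,z) or E'(x,y,z) holds, where D'(x,y,z) means (xy)z = x(yz) and (xz)y = x(zy), and E'(x,y,z) means (xy)z = x(zy) and (xz)y = x(yz). Then for all x, y ∈ L, either x⁻¹(xy) = y or xy = yx; consequently L is a Moufang loop. -/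
/-- If each triple of a right Bol loop satisfies D' or E', then every pair
satisfies the left inverse property or commutes, and the loop is Moufang. -/
theorem stmt_7 {L : Type*} [Mul L] [One L] [Inv L]
    (h1 : ∀ a : L, 1 * a = a) (h2 : ∀ a : L, a * 1 = a)
    (hld : ∀ a b : L, ∃! x : L, a * x = b) (hrd : ∀ a b : L, ∃! y : L, y * a = b)
    (hinvr : ∀ a : L, a * a⁻¹ = 1) (hinvl : ∀ a : L, a⁻¹ * a = 1)
    (bol : ∀ x y z : L, ((x * y) * z) * y = x * ((y * z) * y))
    (hDE : ∀ x y z : L,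
      ((x * y) * z = x * (y * z) ∧ (x * z) * y = x * (z * y)) ∨
      ((x * y) * z = x * (z * y) ∧ (x * z) * y = x * (y * z))) :
    (∀ x y : L, x⁻¹ * (x * y) = y ∨ x * y = y * x) ∧
      (∀ x y z : L, ((x * y) * z) * y = x * (y * (z * y))) := by
  have rcancel : ∀ a u v : L, u * a = v * a → u = v := by
    intro a u v h
    obtain ⟨w, hw, hu⟩ := hrd a (v * a)
    exact (hu u h).trans (hu v rfl).symm
  have rip1 : ∀ a b : L, (a * b) * b⁻¹ = a := by
    intro a b
    apply rcancel b
    have hb := bol a b b⁻¹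
    rw [hinvr, h1] at hb
    exact hb
  have rip2 : ∀ a b : L, (a * b⁻¹) * b = a := by
    intro a b
    apply rcancel b⁻¹
    have hb := bol a b⁻¹ b
    rw [hinvl, h1] at hb
    exact hb
  have lip : ∀ x y : L, x⁻¹ * (x * y) = y := by
    intro x y
    rcases hDE x⁻¹ x y with ⟨hd, _⟩ | ⟨he1, he2⟩
    · rw [← hd, hinvl, h1]
    · rw [hinvl, h1] at he1
      -- he1 : y = x⁻¹ * (y * x)
      have hF : x * (y * x⁻¹) = y := by
        have hb := bol x x⁻¹ (y * x)
        rw [hinvr, h1, rip1, ← he1] at hb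
        exact hb.symm
      have hcomm : x⁻¹ * y = y * x⁻¹ := by
        rcases hDE x⁻¹ x (y * x⁻¹) with ⟨hd', _⟩ | ⟨he', _⟩
        · rw [hinvl, h1] at hd'
          rw [hd', hF]
        · rw [hinvl, h1] at he'
          rw [he', rip2]
      rw [← he2, hcomm, rip2]
  refine ⟨fun x y => Or.inl (lip x y), fun x y z => ?_⟩
  have flex : (y * z) * y = y * (z * y) := by
    rcases hDE y z y with ⟨hd, _⟩ | ⟨he, _⟩
    · exact hd
    · have hb := bol y⁻¹ y z
      rw [hinvl, h1] at hb
      have hzy : z * y = y * z := by rw [hb, he, lip]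
      rw [he, hzy]
  rw [bol, flex]
end

section
/- Let L be a right Bol loop such that for all x, y, z ∈ L, either D'(x,y,z) or F'(x,y,z) holds, where D'(x,y,z) means (xy)z = x(yz) and (xz)y = x(zy), and F'(x,y,z) means (xy)z = (xz)y and x(yz) = x(zy). Then L is a group, i.e., multiplication in L is associative. -/
set_option linter.unusedVariables false

private theorem l2 {L : Type*} [Mul L] [One L] [Inv L] (x y z : L)
    (e0 : (((x * y) * z) * y) = (x * ((y * z) * y)))
    (e1 : (((x * (y * z)) * y) * y) = ((x * (y * z)) * (y * y)))
    (e2 : ((((x * y) * z) * y) * y) = (((x * y) * z) * (y * y)))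
    (e3 : (((x * (y * z)) * (y * y)) * (y * y)⁻¹) = (x * (y * z)))
    (e4 : ((((x * y) * z) * (y * y)) * (y * y)⁻¹) = ((x * y) * z))
    (e5 : ((x * (y * z)) * y) = (x * ((y * z) * y)))
    : ((x * y) * z) = (x * (y * z)) := by grind

private theorem l3 {L : Type*} [Mul L] [One L] [Inv L] (x y z : L)
    (e0 : (((x * y) * z) * y) = (x * ((y * z) * y)))
    (e1 : (((x * (y * z)) * x) * (y * z)) = (x * (((y * z) * x) * (y * z))))
    (e2 : (((y * z) * x) * (y * z)) = ((y * z) * (x * (y * z))))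
    (e3 : x⁻¹⁻¹ = x)
    (e4 : ((y * z) * (x * ((y * z) * y))) = (((y * z) * (x * (y * z))) * y))
    (e5 : ((y * z) * (x * ((y * z) * (x * (y * z))))) = (((y * z) * (x * (y * z))) * (x * (y * z))))
    (e6 : ((y * z) * (x * ((y * z) * ((x * y) * z)))) = (((y * z) * (x * (y * z))) * ((x * y) * z)))
    (e7 : (x⁻¹ * (x⁻¹⁻¹ * (y * z))) = (y * z))
    (e8 : (((y * z) * (x * (y * z)))⁻¹ * (((y * z) * (x * (y * z))) * ((x * y) * z))) = ((x * y) * z))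
    (e9 : (((y * z) * ((x * y) * z))⁻¹ * (((y * z) * ((x * y) * z)) * (x * (y * z)))) = (x * (y * z)))
    (e10 : (((y * z) * ((x * y) * z)) * 1) = ((y * z) * ((x * y) * z)))
    (e11 : ((((y * z) * (x * (y * z))) * y) * y) = (((y * z) * (x * (y * z))) * (y * y)))
    (e12 : ((((y * z) * ((x * y) * z)) * y) * y) = (((y * z) * ((x * y) * z)) * (y * y)))
    (e13 : ((((y * z) * (x * (y * z))) * (y * y)) * (y * y)⁻¹) = ((y * z) * (x * (y * z))))
    (e14 : ((((y * z) * ((x * y) * z)) * (y * y)) * (y * y)⁻¹) = ((y * z) * ((x * y) * z)))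
    (e15 : (((y * z) * ((x * y) * z)) * y) = ((y * z) * (((x * y) * z) * y)))
    : ((x * y) * z) = (x * (y * z)) := by grind

private theorem l5 {L : Type*} [Mul L] [One L] [Inv L] (x y z : L)
    (e0 : ((x * y) * x⁻¹)⁻¹ = (x⁻¹⁻¹ * (x * y)⁻¹))
    (e1 : (((x * y) * z) * y) = (x * ((y * z) * y)))
    (e2 : (y * z) = (z * y))
    (e3 : (y * ((x * y) * z)) = (((x * y) * z) * y))
    (e4 : ((x * y) * x⁻¹) = ((x * x⁻¹) * y))
    (e5 : ((x * y) * (y * z)) = ((x * (y * z)) * y))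
    (e6 : (((x * y) * y) * (y * z)) = (((x * y) * (y * z)) * y))
    (e7 : ((y * x) * y) = (y * (x * y)))
    (e8 : ((y * z) * y) = (y * (z * y)))
    (e9 : ((y * ((x * y) * z)) * y) = (y * (((x * y) * z) * y)))
    (e10 : (x * x⁻¹) = 1)
    (e11 : x⁻¹⁻¹ = x)
    (e12 : (y * (x * (y * (y * z)))) = ((y * (x * y)) * (y * z)))
    (e13 : (y * (y⁻¹ * (x * y))) = (x * y))
    (e14 : (1 * y) = y)
    (e15 : (((x * (y * z)) * y) * y) = ((x * (y * z)) * (y * y)))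
    (e16 : ((((x * y) * z) * y) * y) = (((x * y) * z) * (y * y)))
    (e17 : ((y * x) * x⁻¹) = y)
    (e18 : (((x * (y * z)) * (y * y)) * (y * y)⁻¹) = (x * (y * z)))
    (e19 : ((((x * y) * z) * (y * y)) * (y * y)⁻¹) = ((x * y) * z))
    (e20 : ((x * (x * y)⁻¹) * (x * y)) = x)
    : ((x * y) * z) = (x * (y * z)) := by grind

private theorem l4p {L : Type*} [Mul L] [One L] [Inv L] (x y z : L)
    (e0 : (((x * y) * z) * y) = (x * ((y * z) * y)))
    (e1 : (y * ((x * y) * z)) = (((x * y) * z) * y))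
    (e2 : ((y * z) * (x * ((y * z) * y))) = (((y * z) * (x * (y * z))) * y))
    (e3 : (((y * z) * (x * (y * z))) * y) = ((y * z) * ((x * (y * z)) * y)))
    : ((y * z) * ((x * (y * z)) * y)) = ((y * z) * (y * ((x * y) * z))) := by grind

private theorem l4 {L : Type*} [Mul L] [One L] [Inv L] (x y z : L)
    (e0 : (((x * y) * z) * y) = (x * ((y * z) * y)))
    (e1 : ((((x * (y * z)) * (y * z)) * x) * (y * z)) = ((x * (y * z)) * (((y * z) * x) * (y * z))))
    (e2 : (((((x * y) * z) * (y * z)) * x) * (y * z)) = (((x * y) * z) * (((y * z) * x) * (y * z))))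
    (e3 : ((x * (y * z)) * y) = (y * ((x * y) * z)))
    (e4 : (y * ((x * y) * z)) = (((x * y) * z) * y))
    (e5 : (((x * (y * z)) * y) * (y * z)) = (((x * (y * z)) * (y * z)) * y))
    (e6 : ((((x * y) * z) * y) * (y * z)) = ((((x * y) * z) * (y * z)) * y))
    (e7 : (((y * z) * x) * (y * z)) = ((y * z) * (x * (y * z))))
    (e8 : x⁻¹⁻¹ = x)
    (e9 : ((y * z) * (x * ((y * z) * y))) = (((y * z) * (x * (y * z))) * y))
    (e10 : ((((x * (y * z)) * (y * z)) * y) * y) = (((x * (y * z)) * (y * z)) * (y * y)))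
    (e11 : (((((x * y) * z) * (y * z)) * y) * y) = ((((x * y) * z) * (y * z)) * (y * y)))
    (e12 : (((x * (y * z)) * ((y * z) * (x * (y * z)))) * ((y * z) * (x * (y * z)))⁻¹) = (x * (y * z)))
    (e13 : ((((x * y) * z) * ((y * z) * (x * (y * z)))) * ((y * z) * (x * (y * z)))⁻¹) = ((x * y) * z))
    (e14 : ((((x * (y * z)) * (y * z)) * (y * y)) * (y * y)⁻¹) = ((x * (y * z)) * (y * z)))
    (e15 : (((((x * y) * z) * (y * z)) * (y * y)) * (y * y)⁻¹) = (((x * y) * z) * (y * z)))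
    (e16 : (((y * z) * (x * (y * z))) * y) = ((y * z) * ((x * (y * z)) * y)))
    : ((x * y) * z) = (x * (y * z)) := by grind

private theorem l6p43 {L : Type*} [Mul L] [One L] [Inv L] (x y z : L)
    (e0 : (y * (x * (y * z))) = ((x * (y * z)) * y))
    (e1 : (((y * x) * y) * z) = (((y * x) * z) * y))
    (e2 : ((y * x) * y) = (y * (x * y)))
    (e3 : (y * (x * (y * z))) = ((y * (x * y)) * z))
    (e4 : (1 * (x * (y * z))) = (x * (y * z)))
    : ((1 * (x * (y * z))) * y) = (((y * x) * z) * y) := by grind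

private theorem l6p44 {L : Type*} [Mul L] [One L] [Inv L] (x y z : L)
    (e0 : (((y * x⁻¹) * (x * (y * z))) * x⁻¹) = (y * ((x⁻¹ * (x * (y * z))) * x⁻¹)))
    (e1 : (y * z) = (z * y))
    (e2 : ((y * z) * y) = (y * (z * y)))
    (e3 : x⁻¹⁻¹ = x)
    (e4 : (y * (z * (y * x⁻¹))) = ((y * (z * y)) * x⁻¹))
    (e5 : (x⁻¹ * (x⁻¹⁻¹ * (y * z))) = (y * z))
    (e6 : ((z * y) * x⁻¹) = (z * (y * x⁻¹)))
    : (((y * z) * y) * x⁻¹) = (((y * x⁻¹) * (x * (y * z))) * x⁻¹) := by grind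

private theorem l6p52 {L : Type*} [Mul L] [One L] [Inv L] (x y z : L)
    (e0 : ((y * z) * y) = ((y * x⁻¹) * (x * (y * z))))
    (e1 : ((x⁻¹ * y) * (x * (y * z))) = ((x⁻¹ * (x * (y * z))) * y))
    (e2 : x⁻¹⁻¹ = x)
    (e3 : (x⁻¹ * (x⁻¹⁻¹ * (y * z))) = (y * z))
    : ((y * x⁻¹) * (x * (y * z))) = ((x⁻¹ * y) * (x * (y * z))) := by grind

private theorem l6 {L : Type*} [Mul L] [One L] [Inv L] (x y z : L)
    (e0 : ((x * y) * x⁻¹)⁻¹ = (x⁻¹⁻¹ * (x * y)⁻¹))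
    (e1 : (((y * x⁻¹) * (x * (y * z))) * x⁻¹) = (y * ((x⁻¹ * (x * (y * z))) * x⁻¹)))
    (e2 : (1 * (x * (y * z))) = ((y * x) * z))
    (e3 : ((y * z) * y) = ((y * x⁻¹) * (x * (y * z))))
    (e4 : (y * x⁻¹) = (x⁻¹ * y))
    (e5 : (y * z) = (z * y))
    (e6 : (y * (x * (y * z))) = ((x * (y * z)) * y))
    (e7 : (((y * x) * y) * z) = (((y * x) * z) * y))
    (e8 : ((x⁻¹ * y) * (x * (y * z))) = ((x⁻¹ * (x * (y * z))) * y))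
    (e9 : ((y * x) * y) = (y * (x * y)))
    (e10 : ((y * z) * y) = (y * (z * y)))
    (e11 : x⁻¹⁻¹ = x)
    (e12 : (y * (x * (y * z))) = ((y * (x * y)) * z))
    (e13 : (y * (z * (y * x⁻¹))) = ((y * (z * y)) * x⁻¹))
    (e14 : (x * (x⁻¹ * y)) = y)
    (e15 : (y * (y⁻¹ * (x * y))) = (x * y))
    (e16 : (x⁻¹ * (x⁻¹⁻¹ * (y * z))) = (y * z))
    (e17 : (1 * (x * (y * z))) = (x * (y * z)))
    (e18 : (((y * x) * z) * z⁻¹) = (y * x))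
    (e19 : ((x * (x * y)⁻¹) * (x * y)) = x)
    (e20 : (((x * (y * z)) * z⁻¹) * z) = (x * (y * z)))
    (e21 : ((x * y) * x⁻¹) = (x * (y * x⁻¹)))
    (e22 : ((z * y) * x⁻¹) = (z * (y * x⁻¹)))
    : ((x * y) * z) = (x * (y * z)) := by grind


/-- If each triple of a right Bol loop satisfies D' or F', then the loop is a group. -/
theorem stmt_9 {L : Type*} [Mul L] [One L] [Inv L]
    (h1 : ∀ a : L, 1 * a = a) (h2 : ∀ a : L, a * 1 = a)
    (hld : ∀ a b : L, ∃! x : L, a * x = b) (hrd : ∀ a b : L, ∃! y : L, y * a = b)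
    (hinvr : ∀ a : L, a * a⁻¹ = 1) (hinvl : ∀ a : L, a⁻¹ * a = 1)
    (bol : ∀ x y z : L, ((x * y) * z) * y = x * ((y * z) * y))
    (hDF : ∀ x y z : L,
      ((x * y) * z = x * (y * z) ∧ (x * z) * y = x * (z * y)) ∨
      ((x * y) * z = (x * z) * y ∧ x * (y * z) = x * (z * y))) :
    ∀ x y z : L, (x * y) * z = x * (y * z) := by
  classical
  -- cancellation
  have lc : ∀ a b c : L, a * b = a * c → b = c := by
    intro a b c h
    obtain ⟨w, -, hu⟩ := hld a (a * c)
    rw [hu b h, hu c rfl]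
  have rc : ∀ a b c : L, b * a = c * a → b = c := by
    intro a b c h
    obtain ⟨w, -, hu⟩ := hrd a (c * a)
    rw [hu b h, hu c rfl]
  -- right inverse property
  have hrip : ∀ a b : L, (a * b) * b⁻¹ = a := by
    intro a b
    apply rc b
    have hb := bol a b b⁻¹
    rwa [hinvr, h1] at hb
  have hinvinv : ∀ a : L, a⁻¹⁻¹ = a := by
    intro a
    exact lc a⁻¹ _ _ (by rw [hinvr, hinvl])
  have hrip' : ∀ a b : L, (a * b⁻¹) * b = a := by
    intro a b
    have h' := hrip a b⁻¹
    rwa [hinvinv] at h'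
  have idA : ∀ a w : L, a⁻¹ * ((a * w) * a) = w * a := by
    intro a w
    have h' := bol a⁻¹ a w
    rw [hinvl, h1] at h'
    exact h'.symm
  -- flexibility and left alternativity
  have key : ∀ a b : L, ((a * b) * a = a * (b * a)) ∧ (a * (a * b) = (a * a) * b) := by
    intro a b
    rcases hDF a b a with ⟨d1, d2⟩ | ⟨f1, f2⟩
    · exact ⟨d1, d2.symm⟩
    · have iii : ((a * a) * b) * a = a * ((a * a) * b) := by
        have hb := bol a a b
        rwa [f1] at hb
      rcases hDF a a (a * b) with ⟨g1, g2⟩ | ⟨k1, k2⟩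
      · have e : (a * (a * b)) * a = ((a * a) * b) * a := by rw [g2, f1, ← iii]
        have la : a * (a * b) = (a * a) * b := rc a _ _ e
        have fl : (a * b) * a = a * (b * a) := by rw [f1, ← la, ← f2]
        exact ⟨fl, la⟩
      · have e : a * (a * (a * b)) = a * ((a * a) * b) := by rw [k2, f1]
        have la : a * (a * b) = (a * a) * b := lc a _ _ e
        have fl : (a * b) * a = a * (b * a) := by rw [f1, ← la, ← f2]
        exact ⟨fl, la⟩
  have hflex : ∀ a b : L, (a * b) * a = a * (b * a) := fun a b => (key a b).1
  have hlalt : ∀ a b : L, a * (a * b) = (a * a) * b := fun a b => (key a b).2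
  have hralt : ∀ a b : L, (a * b) * b = a * (b * b) := by
    intro a b
    have hb := bol a b 1
    rwa [h2 (a * b), h2 b] at hb
  -- left inverse property
  have hlip : ∀ a w : L, a * (a⁻¹ * w) = w := by
    intro a w
    have e1 := idA a⁻¹ w
    rw [hinvinv] at e1
    have e2 := congrArg (fun q : L => q * a) e1
    rw [hrip' w a, hflex a ((a⁻¹ * w) * a⁻¹), hrip' (a⁻¹ * w) a] at e2
    exact e2
  have hlip' : ∀ a w : L, a⁻¹ * (a * w) = w := by
    intro a w
    have h' := hlip a⁻¹ w
    rwa [hinvinv] at h'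
  -- antiautomorphic inverse
  have haaip : ∀ a b : L, (a * b)⁻¹ = b⁻¹ * a⁻¹ := by
    intro a b
    have e1 := hrip a⁻¹ (a * b)
    rw [hlip' a b] at e1
    have e2 := hlip' b (a * b)⁻¹
    rw [e1] at e2
    exact e2.symm
  -- left Bol
  have hlbol : ∀ a b c : L, a * (b * (a * c)) = (a * (b * a)) * c := by
    intro a b c
    have hb := congrArg (fun q : L => q⁻¹) (bol c⁻¹ a⁻¹ b⁻¹)
    simp only [haaip, hinvinv] at hb
    exact hb
  -- dichotomy: each pair commutes or right-associates universally
  have dich : ∀ u v : L, u * v = v * u ∨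
      ∀ a : L, ((a * u) * v = a * (u * v)) ∧ ((a * v) * u = a * (v * u)) := by
    intro u v
    by_cases hcm : u * v = v * u
    · exact Or.inl hcm
    · refine Or.inr fun a => ?_
      rcases hDF a u v with ⟨d1, d2⟩ | ⟨f1, f2⟩
      · exact ⟨d1, d2⟩
      · exact absurd (lc a _ _ f2) hcm
  -- exchange: commuting pair exchanges on the right of anything
  have hexch : ∀ u v : L, u * v = v * u → ∀ a : L, (a * u) * v = (a * v) * u := by
    intro u v hcm a
    rcases hDF a u v with ⟨d1, d2⟩ | ⟨f1, f2⟩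
    · rw [d1, d2, hcm]
    · exact f1
  intro x y z
  rcases dich y z with c1 | hrr1
  · rcases dich y (y * z) with c2 | hrr2
    · rcases dich y ((x * y) * z) with c3 | hrr3
      · rcases dich y (x * (y * z)) with c4 | hrr4
        · rcases dich y x⁻¹ with c5 | hrr5
          · exact (l5 x y z
      (haaip (x * y) x⁻¹)
      (bol x y z)
      c1
      c3
      (hexch y x⁻¹ c5 x)
      (hexch y (y * z) c2 x)
      (hexch y (y * z) c2 (x * y))
      (hflex y x)
      (hflex y z)
      (hflex y ((x * y) * z))
      (hinvr x)
      (hinvinv x)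
      (hlbol y x (y * z))
      (hlip y (x * y))
      (h1 y)
      (hralt (x * (y * z)) y)
      (hralt ((x * y) * z) y)
      (hrip y x)
      (hrip (x * (y * z)) (y * y))
      (hrip ((x * y) * z) (y * y))
      (hrip' x (x * y)))
          · have hc43 : 1 * (x * (y * z)) = (y * x) * z :=
              rc y _ _ (l6p43 x y z
      c4
      (hexch y z c1 (y * x))
      (hflex y x)
      (hlbol y x z)
      (h1 (x * (y * z))))
            have hc44 : (y * z) * y = (y * x⁻¹) * (x * (y * z)) :=
              rc x⁻¹ _ _ (l6p44 x y z
      (bol y x⁻¹ (x * (y * z)))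
      c1
      (hflex y z)
      (hinvinv x)
      (hlbol y z x⁻¹)
      (hlip x⁻¹ (y * z))
      (hrr5 z).1)
            have hc52 : y * x⁻¹ = x⁻¹ * y :=
              rc (x * (y * z)) _ _ (l6p52 x y z
      hc44
      (hexch y (x * (y * z)) c4 x⁻¹)
      (hinvinv x)
      (hlip x⁻¹ (y * z)))
            exact (l6 x y z
      (haaip (x * y) x⁻¹)
      (bol y x⁻¹ (x * (y * z)))
      hc43
      hc44
      hc52
      c1
      c4
      (hexch y z c1 (y * x))
      (hexch y (x * (y * z)) c4 x⁻¹)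
      (hflex y x)
      (hflex y z)
      (hinvinv x)
      (hlbol y x z)
      (hlbol y z x⁻¹)
      (hlip x y)
      (hlip y (x * y))
      (hlip x⁻¹ (y * z))
      (h1 (x * (y * z)))
      (hrip (y * x) z)
      (hrip' x (x * y))
      (hrip' (x * (y * z)) z)
      (hrr5 x).1
      (hrr5 z).1)
        · have hc2 : (x * (y * z)) * y = y * ((x * y) * z) :=
            lc (y * z) _ _ (l4p x y z
      (bol x y z)
      c3
      (hlbol (y * z) x y)
      (hrr4 (y * z)).2)
          exact (l4 x y z
      (bol x y z)
      (bol (x * (y * z)) (y * z) x)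
      (bol ((x * y) * z) (y * z) x)
      hc2
      c3
      (hexch y (y * z) c2 (x * (y * z)))
      (hexch y (y * z) c2 ((x * y) * z))
      (hflex (y * z) x)
      (hinvinv x)
      (hlbol (y * z) x y)
      (hralt ((x * (y * z)) * (y * z)) y)
      (hralt (((x * y) * z) * (y * z)) y)
      (hrip (x * (y * z)) ((y * z) * (x * (y * z))))
      (hrip ((x * y) * z) ((y * z) * (x * (y * z))))
      (hrip ((x * (y * z)) * (y * z)) (y * y))
      (hrip (((x * y) * z) * (y * z)) (y * y))
      (hrr4 (y * z)).2)
      · exact (l3 x y z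
      (bol x y z)
      (bol x (y * z) x)
      (hflex (y * z) x)
      (hinvinv x)
      (hlbol (y * z) x y)
      (hlbol (y * z) x (x * (y * z)))
      (hlbol (y * z) x ((x * y) * z))
      (hlip x⁻¹ (y * z))
      (hlip' ((y * z) * (x * (y * z))) ((x * y) * z))
      (hlip' ((y * z) * ((x * y) * z)) (x * (y * z)))
      (h2 ((y * z) * ((x * y) * z)))
      (hralt ((y * z) * (x * (y * z))) y)
      (hralt ((y * z) * ((x * y) * z)) y)
      (hrip ((y * z) * (x * (y * z))) (y * y))
      (hrip ((y * z) * ((x * y) * z)) (y * y))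
      (hrr3 (y * z)).2)
    · exact (l2 x y z
      (bol x y z)
      (hralt (x * (y * z)) y)
      (hralt ((x * y) * z) y)
      (hrip (x * (y * z)) (y * y))
      (hrip ((x * y) * z) (y * y))
      (hrr2 x).2)
  · exact (hrr1 x).1
end

section
/- Let L be a right Bol loop such that for all x, y, z ∈ L, either E'(x,y,z) or F'(x,y,z) holds, where E'(x,y,z) means (xy)z = x(zy) and (xz)y = x(yz), and F'(x,y,z) means (xy)z = (xz)y and x(yz) = x(zy). Then L is an abelian group: multiplication is commutative and associative. -/
/-- If each triple of a right Bol loop satisfies E' or F', then the loop is an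
abelian group. -/
theorem stmt_10 {L : Type*} [Mul L] [One L]
    (h1 : ∀ a : L, 1 * a = a) (h2 : ∀ a : L, a * 1 = a)
    (hld : ∀ a b : L, ∃! x : L, a * x = b) (hrd : ∀ a b : L, ∃! y : L, y * a = b)
    (bol : ∀ x y z : L, ((x * y) * z) * y = x * ((y * z) * y))
    (hEF : ∀ x y z : L,
      ((x * y) * z = x * (z * y) ∧ (x * z) * y = x * (y * z)) ∨
      ((x * y) * z = (x * z) * y ∧ x * (y * z) = x * (z * y))) :
    (∀ x y : L, x * y = y * x) ∧ (∀ x y z : L, (x * y) * z = x * (y * z)) := by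
  have comm : ∀ x y : L, x * y = y * x := by
    intro x y
    rcases hEF 1 x y with ⟨e1, _⟩ | ⟨f1, _⟩
    · simpa [h1] using e1
    · simpa [h1] using f1
  refine ⟨comm, ?_⟩
  intro x y z
  rcases hEF x y z with ⟨e1, _⟩ | ⟨f1, _⟩
  · rw [comm z y] at e1; exact e1
  · rcases hEF y z x with ⟨e1, _⟩ | ⟨g1, _⟩
    · -- e1 : (y*z)*x = y*(x*z)
      calc (x * y) * z = (x * z) * y := f1
        _ = y * (x * z) := comm _ _
        _ = (y * z) * x := e1.symm
        _ = x * (y * z) := comm _ _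
    · -- g1 : (y*z)*x = (y*x)*z
      calc (x * y) * z = (y * x) * z := by rw [comm x y]
        _ = (y * z) * x := g1.symm
        _ = x * (y * z) := comm _ _
end

section
/- Let L be a right Bol loop of finite odd order in which, for all x, y, z ∈ L, at least one of D'(x,y,z), E'(x,y,z), F'(x,y,z) holds (D': (xy)z = x(yz) and (xz)y = x(zy); E': (xy)z = x(zy) and (xz)y = x(yz); F': (xy)z = (xz)y and x(yz) = x(zy)). Then whenever F'(x,y,z) holds, also D'(x,y,z) holds; consequently for every triple x, y, z, D'(x,y,z) or E'(x,y,z) holds. -/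
set_option linter.unusedSectionVars false
set_option linter.unusedVariables false
namespace Stmt11Aux

variable {L : Type*} [Mul L] [One L]

theorem lcancel (hld : ∀ a b : L, ∃! x : L, a * x = b) {a b c : L}
    (h : a * b = a * c) : b = c := by
  obtain ⟨x, -, hu⟩ := hld a (a * c)
  exact (hu b h).trans (hu c rfl).symm

theorem eq_one_of_mul_self (h2 : ∀ a : L, a * 1 = a)
    (hld : ∀ a b : L, ∃! x : L, a * x = b) {x c : L} (h : x * c = x) : c = 1 := by
  obtain ⟨u, -, hu⟩ := hld x x
  exact (hu c h).trans (hu 1 (h2 x)).symm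

theorem ralt (h1 : ∀ a : L, 1 * a = a) (h2 : ∀ a : L, a * 1 = a)
    (bol : ∀ x y z : L, ((x * y) * z) * y = x * ((y * z) * y)) (x y : L) :
    (x * y) * y = x * (y * y) := by
  have h := bol x y 1
  simp only [h2] at h
  exact h

/-- right translation as a permutation -/
noncomputable def R (hrd : ∀ a b : L, ∃! y : L, y * a = b) (a : L) : Equiv.Perm L :=
  Equiv.ofBijective (· * a)
    ⟨fun u v h => by
      obtain ⟨w, -, hu⟩ := hrd a (v * a)
      exact (hu u h).trans (hu v rfl).symm,
      fun b => (hrd a b).exists⟩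

@[simp] theorem R_apply (hrd : ∀ a b : L, ∃! y : L, y * a = b) (a x : L) :
    R hrd a x = x * a := rfl

theorem pow_apply (h1 : ∀ a : L, 1 * a = a) (h2 : ∀ a : L, a * 1 = a)
    (hrd : ∀ a b : L, ∃! y : L, y * a = b)
    (bol : ∀ x y z : L, ((x * y) * z) * y = x * ((y * z) * y)) (z : L) :
    ∀ n : ℕ, ∀ x : L, ((R hrd z) ^ n) x = x * (((R hrd z) ^ n) 1) := by
  intro n
  induction n using Nat.twoStepInduction with
  | zero => intro x; simp only [pow_zero, Equiv.Perm.one_apply]; exact (h2 x).symm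
  | one => intro x; simp only [pow_one, R_apply, h1]
  | more n ih _ =>
    intro x
    have key : ∀ u : L, ((R hrd z) ^ (n + 2)) u = u * ((z * ((R hrd z) ^ n) 1) * z) := by
      intro u
      have e : (R hrd z) ^ (n + 2) = (R hrd z) * ((R hrd z) ^ n * (R hrd z)) := by
        rw [← pow_succ, ← pow_succ']
      simp only [e, Equiv.Perm.mul_apply, R_apply]
      rw [ih (u * z)]
      exact bol u z (((R hrd z) ^ n) 1)
    rw [key x, key 1, h1]

theorem pn_sq (h1 : ∀ a : L, 1 * a = a) (h2 : ∀ a : L, a * 1 = a)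
    (hrd : ∀ a b : L, ∃! y : L, y * a = b)
    (bol : ∀ x y z : L, ((x * y) * z) * y = x * ((y * z) * y)) (z : L) (a : ℕ) :
    (((R hrd z) ^ a) 1) * (((R hrd z) ^ a) 1) = ((R hrd z) ^ (2 * a)) 1 := by
  have h := pow_apply h1 h2 hrd bol z a (((R hrd z) ^ a) 1)
  rw [← h, two_mul, pow_add, Equiv.Perm.mul_apply]

/-- a fixed-point-free involution forces even cardinality (Finset version). -/
theorem even_card_of_involution {α : Type*} [DecidableEq α] (f : α → α)
    (hf : ∀ a, f (f a) = a) :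
    ∀ s : Finset α, (∀ a ∈ s, f a ∈ s) → (∀ a ∈ s, f a ≠ a) → Even s.card := by
  intro s
  induction s using Finset.strongInduction with
  | _ s ih =>
    intro hcl hnf
    rcases s.eq_empty_or_nonempty with rfl | ⟨a, ha⟩
    · simp
    · have hfa : f a ∈ s := hcl a ha
      have hne : f a ≠ a := hnf a ha
      have hsubset : ({a, f a} : Finset α) ⊆ s := by
        intro b hb
        rcases Finset.mem_insert.1 hb with rfl | hb
        · exact ha
        · rcases Finset.mem_singleton.1 hb with rfl; exact hfa
      have hpair : ({a, f a} : Finset α).card = 2 := by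
        rw [Finset.card_insert_of_notMem (by simp [Ne.symm hne]), Finset.card_singleton]
      have hss : s \ {a, f a} ⊂ s := by
        apply Finset.sdiff_ssubset hsubset
        simp
      have hcl' : ∀ b ∈ s \ {a, f a}, f b ∈ s \ {a, f a} := by
        intro b hb
        obtain ⟨hbs, hbn⟩ := Finset.mem_sdiff.1 hb
        refine Finset.mem_sdiff.2 ⟨hcl b hbs, ?_⟩
        simp only [Finset.mem_insert, Finset.mem_singleton] at hbn ⊢
        push_neg at hbn ⊢
        constructor
        · intro h; apply hbn.2; rw [← h, hf]
        · intro h; apply hbn.1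
          have := congrArg f h
          rwa [hf, hf] at this
      have hnf' : ∀ b ∈ s \ {a, f a}, f b ≠ b := fun b hb =>
        hnf b (Finset.mem_sdiff.1 hb).1
      have hev := ih _ hss hcl' hnf'
      have hcard : s.card = (s \ {a, f a}).card + 2 := by
        rw [Finset.card_sdiff_of_subset hsubset, hpair]
        have := Finset.card_le_card hsubset
        omega
      rw [hcard]
      simpa [Nat.even_add] using hev

theorem order_odd [Fintype L] (h1 : ∀ a : L, 1 * a = a) (h2 : ∀ a : L, a * 1 = a)
    (hld : ∀ a b : L, ∃! x : L, a * x = b) (hrd : ∀ a b : L, ∃! y : L, y * a = b)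
    (bol : ∀ x y z : L, ((x * y) * z) * y = x * ((y * z) * y))
    (hodd : Odd (Fintype.card L)) (z : L) : Odd (orderOf (R hrd z)) := by
  classical
  have hfin : Finite (Equiv.Perm L) := by infer_instance
  by_contra hev
  rw [← Nat.not_even_iff_odd, not_not] at hev
  obtain ⟨t, ht⟩ := hev
  have hpos : 0 < orderOf (R hrd z) := orderOf_pos _
  have htpos : 0 < t := by omega
  set τ := (R hrd z) ^ t with hτ
  have hτ2 : ∀ a : L, τ (τ a) = a := by
    intro a
    have : τ * τ = 1 := by
      rw [hτ, ← pow_add, ← ht, pow_orderOf_eq_one]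
    calc τ (τ a) = (τ * τ) a := (Equiv.Perm.mul_apply _ _ _).symm
    _ = a := by rw [this]; rfl
  have hτne : ∀ a : L, τ a ≠ a := by
    intro a h
    have hpa := pow_apply h1 h2 hrd bol z t a
    rw [← hτ] at hpa
    rw [h] at hpa
    have h1' : ((R hrd z) ^ t) 1 = 1 := eq_one_of_mul_self h2 hld hpa.symm
    have : τ = 1 := by
      apply Equiv.ext
      intro u
      have := pow_apply h1 h2 hrd bol z t u
      rw [← hτ] at this
      rw [this, h1', h2]
      rfl
    have hdvd := orderOf_dvd_of_pow_eq_one (n := t) this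
    have := Nat.le_of_dvd htpos hdvd
    omega
  have heven : Even (Fintype.card L) := by
    have := even_card_of_involution (fun a => τ a) hτ2 Finset.univ
      (fun a _ => Finset.mem_univ _) (fun a _ => hτne a)
    simpa [Finset.card_univ] using this
  rw [← Nat.not_even_iff_odd] at hodd
  exact hodd heven

end Stmt11Aux

open Stmt11Aux
/-- In a right Bol loop of odd order in which each triple satisfies D', E' or F',
whenever F' holds so does D'; consequently each triple satisfies D' or E'. -/
theorem stmt_11 {L : Type*} [Mul L] [One L] [Fintype L]
    (h1 : ∀ a : L, 1 * a = a) (h2 : ∀ a : L, a * 1 = a)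
    (hld : ∀ a b : L, ∃! x : L, a * x = b) (hrd : ∀ a b : L, ∃! y : L, y * a = b)
    (bol : ∀ x y z : L, ((x * y) * z) * y = x * ((y * z) * y))
    (hodd : Odd (Fintype.card L))
    (hDEF : ∀ x y z : L,
      ((x * y) * z = x * (y * z) ∧ (x * z) * y = x * (z * y)) ∨
      ((x * y) * z = x * (z * y) ∧ (x * z) * y = x * (y * z)) ∨
      ((x * y) * z = (x * z) * y ∧ x * (y * z) = x * (z * y))) :
    (∀ x y z : L, ((x * y) * z = (x * z) * y ∧ x * (y * z) = x * (z * y)) →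
      ((x * y) * z = x * (y * z) ∧ (x * z) * y = x * (z * y))) ∧
    (∀ x y z : L,
      ((x * y) * z = x * (y * z) ∧ (x * z) * y = x * (z * y)) ∨
      ((x * y) * z = x * (z * y) ∧ (x * z) * y = x * (y * z))) := by
  have hRA : ∀ x y : L, (x * y) * y = x * (y * y) := ralt h1 h2 bol
  have main : ∀ x y z : L, ((x * y) * z = (x * z) * y ∧ x * (y * z) = x * (z * y)) →
      ((x * y) * z = x * (y * z) ∧ (x * z) * y = x * (z * y)) := by
    intro x y z hF
    -- z commutes with y
    have hcz : y * z = z * y := lcancel hld hF.2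
    -- squaring preserves commuting with y
    have comsq : ∀ w : L, y * w = w * y → y * (w * w) = (w * w) * y := by
      intro w hc
      rcases hDEF w y w with ⟨hA, hB⟩ | ⟨hA, hB⟩ | ⟨hA, hB⟩
      · calc y * (w * w) = (y * w) * w := (hRA y w).symm
          _ = (w * y) * w := by rw [hc]
          _ = w * (y * w) := hA
          _ = w * (w * y) := by rw [hc]
          _ = (w * w) * y := hB.symm
      · calc y * (w * w) = (y * w) * w := (hRA y w).symm
          _ = (w * y) * w := by rw [hc]
          _ = w * (w * y) := hA
          _ = w * (y * w) := by rw [← hc]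
          _ = (w * w) * y := hB.symm
      · calc y * (w * w) = (y * w) * w := (hRA y w).symm
          _ = (w * y) * w := by rw [hc]
          _ = (w * w) * y := hA
    -- the key Bol computation: from "A = C" at w, get "A = B" at w * w
    have keysq : ∀ w : L, y * w = w * y → (x * y) * w = (x * w) * y →
        (x * y) * (w * w) = x * (y * (w * w)) := by
      intro w hc hac
      calc (x * y) * (w * w) = ((x * y) * w) * w := (hRA (x * y) w).symm
        _ = ((x * w) * y) * w := by rw [hac]
        _ = x * ((w * y) * w) := bol x w y
        _ = x * ((y * w) * w) := by rw [hc]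
        _ = x * (y * (w * w)) := by rw [hRA y w]
    -- from "A = B" at w (plus commuting) get "A = C" at w
    have gac : ∀ w : L, y * w = w * y → (x * y) * w = x * (y * w) →
        (x * y) * w = (x * w) * y := by
      intro w hc hg
      rcases hDEF x y w with ⟨hA, hB⟩ | ⟨hA, hB⟩ | ⟨hA, hB⟩
      · calc (x * y) * w = x * (y * w) := hA
          _ = x * (w * y) := by rw [hc]
          _ = (x * w) * y := hB.symm
      · calc (x * y) * w = x * (w * y) := hA
          _ = x * (y * w) := by rw [← hc]
          _ = (x * w) * y := hB.symm
      · exact hA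
    -- powers of z
    set σ := R hrd z with hσ
    set pn : ℕ → L := fun n => (σ ^ n) 1 with hpn
    have hpsq : ∀ a : ℕ, pn a * pn a = pn (2 * a) := fun a => pn_sq h1 h2 hrd bol z a
    have hp1 : pn 1 = z := by simp [hpn, hσ, h1]
    have chain : ∀ j : ℕ, 1 ≤ j →
        (y * pn (2 ^ j) = pn (2 ^ j) * y) ∧
        ((x * y) * pn (2 ^ j) = x * (y * pn (2 ^ j))) := by
      intro j hj
      induction j, hj using Nat.le_induction with
      | base =>
        have h2z : pn (2 ^ 1) = z * z := by
          rw [pow_one, ← hp1]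
          have := hpsq 1
          rw [mul_one] at this
          exact this.symm
        rw [h2z]
        exact ⟨comsq z hcz, keysq z hcz hF.1⟩
      | succ j hj ih =>
        have hstep : pn (2 ^ (j + 1)) = pn (2 ^ j) * pn (2 ^ j) := by
          rw [pow_succ, mul_comm (2 ^ j) 2]
          exact (hpsq (2 ^ j)).symm
        rw [hstep]
        exact ⟨comsq _ ih.1, keysq _ ih.1 (gac _ ih.1 ih.2)⟩
    -- odd order: z is a power of z²
    have hordodd : Odd (orderOf σ) := order_odd h1 h2 hld hrd bol hodd z
    have hpos : 0 < orderOf σ := orderOf_pos _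
    set n0 := orderOf σ with hn0
    have hcop : Nat.Coprime 2 n0 := Nat.coprime_two_left.mpr hordodd
    have hk : 2 ^ n0.totient ≡ 1 [MOD n0] := Nat.ModEq.pow_totient hcop
    have hk1 : 1 ≤ n0.totient := Nat.totient_pos.mpr hpos
    have hzz : pn (2 ^ n0.totient) = z := by
      have : σ ^ (2 ^ n0.totient) = σ ^ 1 := pow_eq_pow_iff_modEq.mpr hk
      rw [hpn]
      simp only [this, pow_one]
      simp [hσ, h1]
    have hgood := (chain n0.totient hk1).2
    rw [hzz] at hgood
    refine ⟨hgood, ?_⟩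
    calc (x * z) * y = (x * y) * z := hF.1.symm
      _ = x * (y * z) := hgood
      _ = x * (z * y) := hF.2
  exact ⟨main, fun x y z => by
    rcases hDEF x y z with h | h | h
    · exact Or.inl h
    · exact Or.inr h
    · exact Or.inl (main x y z h)⟩
end

section
/- In a right Bol loop L, if elements x, y, z satisfy (xy)z = (xz)y and yz = zy, then (xz)y² = x(zy²), i.e., x, z, and y² associate in that order. -/
/-- In a right Bol loop, if (xy)z = (xz)y and yz = zy, then x, z and y² associate
in that order. -/
theorem stmt_12 {L : Type*} [Mul L] [One L]
    (h1 : ∀ a : L, 1 * a = a) (h2 : ∀ a : L, a * 1 = a)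
    (hld : ∀ a b : L, ∃! x : L, a * x = b) (hrd : ∀ a b : L, ∃! y : L, y * a = b)
    (bol : ∀ x y z : L, ((x * y) * z) * y = x * ((y * z) * y))
    (x y z : L)
    (hxyz : (x * y) * z = (x * z) * y) (hyz : y * z = z * y) :
    (x * z) * (y * y) = x * (z * (y * y)) := by
  have sq : ∀ a : L, a * (y * y) = (a * y) * y := by
    intro a
    have := bol a y 1
    simpa [h2] using this.symm
  rw [sq, sq, ← hxyz, bol, ← hyz]
end

section
/- Let L be a Moufang loop and suppose x, y, z ∈ L satisfy both y(zx) = x(yz) and (y(yz))x = y(x(yz)). Then (y²z)x = y²(zx). -/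
section Aux
variable {L : Type*} [Mul L] [One L]

/-- Left alternative law in a Moufang loop. -/
theorem aux_left_alt
    (u1 : ∀ a : L, 1 * a = a) (u2 : ∀ a : L, a * 1 = a)
    (hld : ∀ a b : L, ∃! x : L, a * x = b) (hrd : ∀ a b : L, ∃! y : L, y * a = b)
    (mfg : ∀ x y z : L, ((x * y) * z) * y = x * (y * (z * y)))
    (p r : L) : p * (p * r) = (p * p) * r := by
  classical
  -- left inverse
  set inv : L → L := fun a => (hrd a 1).choose with hinv
  have linv : ∀ a : L, inv a * a = 1 := fun a => (hrd a 1).choose_spec.1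
  -- from u*v = 1 : u*(v*w) = w
  have lip : ∀ u v : L, u * v = 1 → ∀ w : L, u * (v * w) = w := by
    intro u v huv w
    obtain ⟨c, hc, -⟩ := hrd v w
    have := mfg u v c
    rw [huv, u1, hc] at this
    exact this.symm
  -- from u*v = 1 : (b*u)*v = b
  have rip : ∀ u v : L, u * v = 1 → ∀ b : L, (b * u) * v = b := by
    intro u v huv b
    obtain ⟨a, ha, -⟩ := hrd v b
    have := mfg a v u
    rw [huv, u2, ha] at this
    exact this
  -- right inverse
  have rinv : ∀ a : L, a * inv a = 1 := by
    intro a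
    have h := lip (inv a) a (linv a) (inv a)
    have h' : inv a * 1 = inv a := u2 _
    exact (hld (inv a) (inv a)).unique h h'
  -- inv involutive
  have invol : ∀ a : L, inv (inv a) = a := by
    intro a
    exact (hrd (inv a) 1).unique (linv (inv a)) (rinv a)
  -- anti-automorphism: inv (a*b) = inv b * inv a
  have anti : ∀ a b : L, inv (a * b) = inv b * inv a := by
    intro a b
    have e1 : inv a * (a * b) = b := lip (inv a) a (linv a) b
    have e2 : (inv a * (a * b)) * inv (a * b) = inv a :=
      rip (a * b) (inv (a * b)) (rinv (a * b)) (inv a)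
    rw [e1] at e2
    -- e2 : b * inv (a*b) = inv a
    have e3 : inv b * (b * inv (a * b)) = inv (a * b) := lip (inv b) b (linv b) _
    rw [e2] at e3
    exact e3.symm
  -- left Moufang identity
  have lmfg : ∀ a b c : L, a * (b * (a * c)) = ((a * b) * a) * c := by
    intro a b c
    have h := mfg (inv c) (inv a) (inv b)
    -- h : ((inv c * inv a) * inv b) * inv a = inv c * (inv a * (inv b * inv a))
    have h2 := congrArg inv h
    rw [anti, anti, anti, anti, anti, anti, invol, invol, invol] at h2
    exact h2
  have := lmfg p 1 r
  rw [u1, u2] at this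
  exact this

end Aux

/-- In a Moufang loop, if y(zx) = x(yz) and (y(yz))x = y(x(yz)), then
(y²z)x = y²(zx). -/
theorem stmt_14 {L : Type*} [Mul L] [One L]
    (h1 : ∀ a : L, 1 * a = a) (h2 : ∀ a : L, a * 1 = a)
    (hld : ∀ a b : L, ∃! x : L, a * x = b) (hrd : ∀ a b : L, ∃! y : L, y * a = b)
    (mfg : ∀ x y z : L, ((x * y) * z) * y = x * (y * (z * y)))
    (x y z : L)
    (h1 : y * (z * x) = x * (y * z))
    (h2 : (y * (y * z)) * x = y * (x * (y * z))) :
    ((y * y) * z) * x = (y * y) * (z * x) := by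
  rename_i u1 u2
  have la := aux_left_alt u1 u2 hld hrd mfg
  calc ((y * y) * z) * x = (y * (y * z)) * x := by rw [la]
    _ = y * (x * (y * z)) := h2
    _ = y * (y * (z * x)) := by rw [← h1]
    _ = (y * y) * (z * x) := la y (z * x)
end

section
/- Let L be a right Bol loop in which for all x, y, z ∈ L, either D'(x,y,z) or E'(x,y,z) holds (D': (xy)z = x(yz) and (xz)y = x(zy); E': (xy)z = x(zy) and (xz)y = x(yz)). Then L is an extra loop: it satisfies the identity ((xy)z)x = x(y(zx)) for all x, y, z. -/
/-- If each triple of a right Bol loop satisfies D' or E', then the loop is extra. -/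
theorem stmt_17 {L : Type*} [Mul L] [One L] [Inv L]
    (h1 : ∀ a : L, 1 * a = a) (h2 : ∀ a : L, a * 1 = a)
    (hld : ∀ a b : L, ∃! x : L, a * x = b) (hrd : ∀ a b : L, ∃! y : L, y * a = b)
    (hinvr : ∀ a : L, a * a⁻¹ = 1) (hinvl : ∀ a : L, a⁻¹ * a = 1)
    (bol : ∀ x y z : L, ((x * y) * z) * y = x * ((y * z) * y))
    (hDE : ∀ x y z : L,
      ((x * y) * z = x * (y * z) ∧ (x * z) * y = x * (z * y)) ∨
      ((x * y) * z = x * (z * y) ∧ (x * z) * y = x * (y * z))) :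
    ∀ x y z : L, ((x * y) * z) * x = x * (y * (z * x)) := by
  have cancel_left : ∀ a b c : L, a * b = a * c → b = c := by
    intro a b c h
    obtain ⟨w, hw, huniq⟩ := hld a (a * c)
    exact (huniq b h).trans (huniq c rfl).symm
  have cancel_right : ∀ a b c : L, b * a = c * a → b = c := by
    intro a b c h
    obtain ⟨w, hw, huniq⟩ := hrd a (c * a)
    exact (huniq b h).trans (huniq c rfl).symm
  have ralt : ∀ a b : L, (a * b) * b = a * (b * b) := by
    intro a b
    have hb := bol a b 1
    rwa [h2, h2] at hb
  have rip : ∀ a b : L, (a * b) * b⁻¹ = a := by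
    intro a b
    have hb := bol a b b⁻¹
    rw [hinvr, h1] at hb
    exact cancel_right b _ _ hb
  have invinv : ∀ a : L, a⁻¹⁻¹ = a := by
    intro a
    exact cancel_left a⁻¹ _ _ ((hinvr a⁻¹).trans (hinvl a).symm)
  have f0 : ∀ a b : L, a⁻¹ * ((a * b) * a) = b * a := by
    intro a b
    have hb := bol a⁻¹ a b
    rw [hinvl, h1] at hb
    exact hb.symm
  have flex : ∀ a b : L, (a * b) * a = a * (b * a) := by
    intro a b
    rcases hDE a b a with ⟨d1, d2⟩ | ⟨e1, e2⟩
    · exact d1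
    · have hf := f0 a b
      rw [e1] at hf
      rcases hDE a⁻¹ a (a * b) with ⟨k1, k2⟩ | ⟨k1, k2⟩
      · rw [hinvl, h1] at k1
        have hc : a * b = b * a := k1.trans hf
        rw [e1, hc]
      · rw [hinvl, h1, e1] at k1
        have hc : a * b = b * a := k1.trans hf
        rw [e1, hc]
  have lalt : ∀ a b : L, (a * a) * b = a * (a * b) := by
    intro a b
    rcases hDE a a b with ⟨d1, d2⟩ | ⟨e1, e2⟩
    · exact d1
    · have hc : b * a = a * b := cancel_left a _ _ ((flex a b).symm.trans e2)
      rw [e1, hc]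
  have lip : ∀ a b : L, a⁻¹ * (a * b) = b := by
    intro a b
    obtain ⟨y, hy, -⟩ := hrd a b
    have hf := f0 a y
    rw [flex, hy] at hf
    exact hf
  have lip' : ∀ a b : L, a * (a⁻¹ * b) = b := by
    intro a b
    have hl := lip a⁻¹ b
    rwa [invinv] at hl
  have aaip : ∀ a b : L, (a * b)⁻¹ = b⁻¹ * a⁻¹ := by
    intro a b
    have hx : b * (a * b)⁻¹ = a⁻¹ := by
      have h2' : (a⁻¹ * (a * b)) * (a * b)⁻¹ = a⁻¹ := rip a⁻¹ (a * b)
      rwa [lip] at h2'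
    have hl := lip b (a * b)⁻¹
    rw [hx] at hl
    exact hl.symm
  have lb : ∀ a b c : L, ((a * b) * a) * c = a * (b * (a * c)) := by
    intro a b c
    have hb := bol c⁻¹ a⁻¹ b⁻¹
    have hi := congrArg Inv.inv hb
    simp only [aaip, invinv] at hi
    rw [flex]
    exact hi.symm
  have assoc_s23 : ∀ a b c : L, (a * b) * c = a * (b * c) → (a * c) * b = a * (c * b) := by
    intro a b c h
    rcases hDE a b c with ⟨d1, d2⟩ | ⟨e1, e2⟩
    · exact d2
    · have hbc : b * c = c * b := cancel_left a _ _ (h.symm.trans e1)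
      rw [e2, hbc]
  have assoc_rev : ∀ a b c : L, (a * b) * c = a * (b * c) →
      (c⁻¹ * b⁻¹) * a⁻¹ = c⁻¹ * (b⁻¹ * a⁻¹) := by
    intro a b c h
    have hi := congrArg Inv.inv h
    simp only [aaip] at hi
    exact hi.symm
  have assoc_cyc : ∀ a b c : L, (a * b) * c = a * (b * c) → (c * a) * b = c * (a * b) := by
    intro a b c h
    have h2' := assoc_s23 a b c h
    have h3' := assoc_rev a c b h2'
    have h4' := assoc_s23 _ _ _ h3'
    have h5' := assoc_rev _ _ _ h4'
    simp only [invinv] at h5'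
    exact h5'
  have assoc_cyc2 : ∀ a b c : L, (a * b) * c = a * (b * c) → (b * c) * a = b * (c * a) := by
    intro a b c h
    exact assoc_cyc c a b (assoc_cyc a b c h)
  have assoc_s12 : ∀ a b c : L, (a * b) * c = a * (b * c) → (b * a) * c = b * (a * c) := by
    intro a b c h
    exact assoc_s23 b c a (assoc_cyc2 a b c h)
  have assoc_s13 : ∀ a b c : L, (a * b) * c = a * (b * c) → (c * b) * a = c * (b * a) := by
    intro a b c h
    exact assoc_s23 c a b (assoc_cyc a b c h)
  have T2 : ∀ u s x : L, (u * (x * s)) * x = (u * x) * (s * x) := by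
    intro u s x
    rcases hDE u x s with ⟨h1d1, h1d2⟩ | ⟨h1e1, h1e2⟩
    · have e1 : (u * (x * s)) = ((u * x) * s) := (h1d1).symm
      have e2 : ((u * (x * s)) * x) = (((u * x) * s) * x) := congrArg₂ (· * ·) e1 rfl
      have e3 : ((x * u) * x) = (x * (u * x)) := flex x u
      have e4 : (((x * u) * x) * s) = ((x * (u * x)) * s) := congrArg₂ (· * ·) e3 rfl
      have e5 : (((x * u) * x) * s) = (x * (u * (x * s))) := lb x u s
      have e6 : (x * (u * (x * s))) = (x * ((u * x) * s)) := congrArg₂ (· * ·) rfl e1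
      have e7 : ((x * (u * x)) * s) = (x * ((u * x) * s)) := ((((e4).symm).trans e5).trans e6)
      have e8 : (((u * x) * s) * x) = ((u * x) * (s * x)) := assoc_cyc2 x (u * x) s e7
      have e9 : ((u * (x * s)) * x) = ((u * x) * (s * x)) := ((e2).trans e8)
      exact e9
    · rcases hDE u x (s * x) with ⟨h2d1, h2d2⟩ | ⟨h2e1, h2e2⟩
      · have e1 : (((u * s) * x) * x) = ((u * (x * s)) * x) := congrArg₂ (· * ·) h1e2 rfl
        have e2 : (((u * x) * s) * x) = (u * ((x * s) * x)) := bol u x s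
        have e3 : ((x * s) * x) = (x * (s * x)) := flex x s
        have e4 : (u * ((x * s) * x)) = (u * (x * (s * x))) := congrArg₂ (· * ·) rfl e3
        have e5 : (((u * x) * s) * x) = ((u * x) * (s * x)) := (((e2).trans e4).trans (h2d1).symm)
        have e6 : ((((u * x) * s) * x) * x) = (((u * x) * (s * x)) * x) := congrArg₂ (· * ·) e5 rfl
        have e7 : ((((u * x) * s) * x) * x) = (((u * x) * s) * (x * x)) := ralt ((u * x) * s) x
        have e8 : (u * (s * x)) = ((u * x) * s) := (h1e1).symm
        have e9 : ((u * (s * x)) * (x * x)) = (((u * x) * s) * (x * x)) := congrArg₂ (· * ·) e8 rfl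
        have e10 : (((x * x) * (u * (s * x))) * (x * x)) = ((x * x) * ((u * (s * x)) * (x * x))) := flex (x * x) (u * (s * x))
        have e11 : ((x * x) * (u * (s * x))) = (x * (x * (u * (s * x)))) := lalt x (u * (s * x))
        have e12 : (x * ((u * x) * s)) = (x * (u * (s * x))) := congrArg₂ (· * ·) rfl h1e1
        have e13 : (x * (x * ((u * x) * s))) = (x * (x * (u * (s * x)))) := congrArg₂ (· * ·) rfl e12
        have e14 : ((x * (u * x)) * s) = (x * ((u * x) * s)) := assoc_cyc (u * x) s x e5
        have e15 : ((x * u) * x) = (x * (u * x)) := flex x u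
        have e16 : (((x * u) * x) * s) = ((x * (u * x)) * s) := congrArg₂ (· * ·) e15 rfl
        have e17 : (((x * u) * x) * s) = (x * (u * (x * s))) := lb x u s
        have e18 : (u * (x * s)) = ((u * s) * x) := (h1e2).symm
        have e19 : (x * (u * (x * s))) = (x * ((u * s) * x)) := congrArg₂ (· * ·) rfl e18
        have e20 : ((x * (u * s)) * x) = (x * ((u * s) * x)) := flex x (u * s)
        have e21 : (x * ((u * x) * s)) = ((x * (u * s)) * x) := ((((((e14).symm).trans (e16).symm).trans e17).trans e19).trans (e20).symm)
        have e22 : (x * (x * ((u * x) * s))) = (x * ((x * (u * s)) * x)) := congrArg₂ (· * ·) rfl e21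
        have e23 : (x * ((x * (u * s)) * x)) = (x * (x * ((u * s) * x))) := congrArg₂ (· * ·) rfl e20
        have e24 : ((x * x) * ((u * s) * x)) = (x * (x * ((u * s) * x))) := lalt x ((u * s) * x)
        have e25 : ((x * x) * (u * (s * x))) = ((x * x) * ((u * s) * x)) := (((((e11).trans (e13).symm).trans e22).trans e23).trans (e24).symm)
        have e26 : (((x * x) * (u * (s * x))) * (x * x)) = (((x * x) * ((u * s) * x)) * (x * x)) := congrArg₂ (· * ·) e25 rfl
        have e27 : (((x * x) * ((u * s) * x)) * (x * x)) = ((x * x) * (((u * s) * x) * (x * x))) := flex (x * x) ((u * s) * x)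
        have e28 : (u * (x * s)) = ((u * s) * x) := (h1e2).symm
        have e29 : ((u * (x * s)) * (x * x)) = (((u * s) * x) * (x * x)) := congrArg₂ (· * ·) e28 rfl
        have e30 : (((u * s) * x) * (x * x)) = ((u * (x * s)) * (x * x)) := (e29).symm
        have e31 : ((x * x) * (((u * s) * x) * (x * x))) = ((x * x) * ((u * (x * s)) * (x * x))) := congrArg₂ (· * ·) rfl e30
        have e32 : ((x * x) * ((u * (s * x)) * (x * x))) = ((x * x) * ((u * (x * s)) * (x * x))) := (((((e10).symm).trans e26).trans e27).trans e31)
        have e33 : ((u * (s * x)) * (x * x)) = ((u * (x * s)) * (x * x)) := cancel_left (x * x) ((u * (s * x)) * (x * x)) ((u * (x * s)) * (x * x)) (e32.trans (congrArg₂ (· * ·) (rfl).symm rfl))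
        have e34 : ((((u * s) * x) * x) * x) = (((u * s) * x) * (x * x)) := ralt ((u * s) * x) x
        have e35 : (((u * x) * (s * x)) * x) = ((((u * s) * x) * x) * x) := (((((((e6).symm).trans e7).trans (e9).symm).trans e33).trans e29).trans (e34).symm)
        have e36 : ((u * x) * (s * x)) = (((u * s) * x) * x) := cancel_right x ((u * x) * (s * x)) (((u * s) * x) * x) (e35.trans (congrArg₂ (· * ·) rfl (rfl).symm))
        have e37 : ((u * (x * s)) * x) = ((u * x) * (s * x)) := (((e1).symm).trans (e36).symm)
        exact e37
      · rcases hDE u s (x * x) with ⟨h3d1, h3d2⟩ | ⟨h3e1, h3e2⟩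
        · have e1 : (((u * s) * x) * x) = ((u * (x * s)) * x) := congrArg₂ (· * ·) h1e2 rfl
          have e2 : (((u * s) * x) * x) = ((u * s) * (x * x)) := ralt (u * s) x
          have e3 : ((s * x) * x) = (s * (x * x)) := ralt s x
          have e4 : (s * (x * x)) = ((s * x) * x) := (e3).symm
          have e5 : (u * (s * (x * x))) = (u * ((s * x) * x)) := congrArg₂ (· * ·) rfl e4
          have e6 : ((u * (x * s)) * x) = ((u * x) * (s * x)) := ((((((e1).symm).trans e2).trans h3d1).trans e5).trans (h2e1).symm)
          exact e6
        · rcases hDE u (x * s) x with ⟨h4d1, h4d2⟩ | ⟨h4e1, h4e2⟩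
          · have e1 : (((u * s) * x) * x) = ((u * (x * s)) * x) := congrArg₂ (· * ·) h1e2 rfl
            have e2 : (((u * s) * x) * x) = ((u * s) * (x * x)) := ralt (u * s) x
            have e3 : ((x * x) * s) = (x * (x * s)) := lalt x s
            have e4 : (u * ((x * x) * s)) = (u * (x * (x * s))) := congrArg₂ (· * ·) rfl e3
            have e5 : ((x * u) * x) = (x * (u * x)) := flex x u
            have e6 : (((x * u) * x) * s) = ((x * (u * x)) * s) := congrArg₂ (· * ·) e5 rfl
            have e7 : (((x * u) * x) * s) = (x * (u * (x * s))) := lb x u s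
            have e8 : ((x * (u * (x * s))) * x) = (x * ((u * (x * s)) * x)) := flex x (u * (x * s))
            have e9 : (((u * x) * s) * x) = (u * ((x * s) * x)) := bol u x s
            have e10 : ((u * (x * s)) * x) = (((u * x) * s) * x) := ((h4d1).trans (e9).symm)
            have e11 : (x * ((u * (x * s)) * x)) = (x * (((u * x) * s) * x)) := congrArg₂ (· * ·) rfl e10
            have e12 : ((x * ((u * x) * s)) * x) = (x * (((u * x) * s) * x)) := flex x ((u * x) * s)
            have e13 : ((x * (u * (x * s))) * x) = ((x * ((u * x) * s)) * x) := (((e8).trans e11).trans (e12).symm)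
            have e14 : (x * (u * (x * s))) = (x * ((u * x) * s)) := cancel_right x (x * (u * (x * s))) (x * ((u * x) * s)) (e13.trans (congrArg₂ (· * ·) rfl (rfl).symm))
            have e15 : ((x * (u * x)) * s) = (x * ((u * x) * s)) := ((((e6).symm).trans e7).trans e14)
            have e16 : (((u * x) * x) * s) = ((u * x) * (x * s)) := assoc_s12 x (u * x) s e15
            have e17 : ((u * x) * x) = (u * (x * x)) := ralt u x
            have e18 : (((u * x) * x) * s) = ((u * (x * x)) * s) := congrArg₂ (· * ·) e17 rfl
            have e19 : ((s * x) * x) = (s * (x * x)) := ralt s x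
            have e20 : (s * (x * x)) = ((s * x) * x) := (e19).symm
            have e21 : (u * (s * (x * x))) = (u * ((s * x) * x)) := congrArg₂ (· * ·) rfl e20
            have e22 : ((u * (x * s)) * x) = ((u * x) * (s * x)) := (((((((((((e1).symm).trans e2).trans h3e1).trans e4).trans (h4d2).symm).trans (e16).symm).trans e18).trans h3e2).trans e21).trans (h2e1).symm)
            exact e22
          · rcases hDE (u * x) x s with ⟨h5d1, h5d2⟩ | ⟨h5e1, h5e2⟩
            · have e1 : (((u * x) * s) * x) = (u * ((x * s) * x)) := bol u x s
              have e2 : ((u * x) * (s * x)) = ((u * x) * (x * s)) := ((((h5d2).symm).trans e1).trans (h4e2).symm)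
              have e3 : (s * x) = (x * s) := cancel_left (u * x) (s * x) (x * s) (e2.trans (congrArg₂ (· * ·) (rfl).symm rfl))
              have e4 : (u * (s * x)) = (u * (x * s)) := congrArg₂ (· * ·) rfl e3
              have e5 : (u * (x * s)) = ((u * x) * s) := (((e4).symm).trans (h1e1).symm)
              have e6 : ((u * (x * s)) * x) = (((u * x) * s) * x) := congrArg₂ (· * ·) e5 rfl
              have e7 : ((u * (x * s)) * x) = ((u * x) * (s * x)) := ((e6).trans h5d2)
              exact e7
            · rcases hDE (u * x) x (x * s) with ⟨h6d1, h6d2⟩ | ⟨h6e1, h6e2⟩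
              · have e1 : ((x * x) * s) = (x * (x * s)) := lalt x s
                have e2 : (u * ((x * x) * s)) = (u * (x * (x * s))) := congrArg₂ (· * ·) rfl e1
                have e3 : (((x * x) * s) * x) = (x * ((x * s) * x)) := bol x x s
                have e4 : ((x * (x * s)) * x) = (x * ((x * s) * x)) := flex x (x * s)
                have e5 : (((u * x) * (s * x)) * x) = (u * ((x * (s * x)) * x)) := bol u x (s * x)
                have e6 : ((((u * x) * x) * s) * x) = (((u * x) * (s * x)) * x) := congrArg₂ (· * ·) h5e1 rfl
                have e7 : ((((u * x) * x) * s) * x) = ((u * x) * ((x * s) * x)) := bol (u * x) x s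
                have e8 : (((u * x) * (x * s)) * x) = (u * ((x * (x * s)) * x)) := bol u x (x * s)
                have e9 : (u * ((x * (s * x)) * x)) = (u * ((x * (x * s)) * x)) := ((((((e5).symm).trans (e6).symm).trans e7).trans (h6d2).symm).trans e8)
                have e10 : ((x * (s * x)) * x) = ((x * (x * s)) * x) := cancel_left u ((x * (s * x)) * x) ((x * (x * s)) * x) (e9.trans (congrArg₂ (· * ·) (rfl).symm rfl))
                have e11 : (((x * x) * s) * x) = ((x * (s * x)) * x) := (((e3).trans (e4).symm).trans (e10).symm)
                have e12 : ((x * x) * s) = (x * (s * x)) := cancel_right x ((x * x) * s) (x * (s * x)) (e11.trans (congrArg₂ (· * ·) rfl (rfl).symm))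
                have e13 : (u * ((x * x) * s)) = (u * (x * (s * x))) := congrArg₂ (· * ·) rfl e12
                have e14 : (u * (s * x)) = ((u * x) * s) := (h1e1).symm
                have e15 : ((u * (s * x)) * x) = (((u * x) * s) * x) := congrArg₂ (· * ·) e14 rfl
                have e16 : ((u * x) * (x * s)) = (((u * x) * s) * x) := (h5e2).symm
                have e17 : (((u * x) * (x * s)) * x) = ((((u * x) * s) * x) * x) := congrArg₂ (· * ·) e16 rfl
                have e18 : ((((u * x) * s) * x) * x) = (((u * x) * (s * x)) * x) := (((((e17).symm).trans h6d2).trans (e7).symm).trans e6)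
                have e19 : (((u * x) * s) * x) = ((u * x) * (s * x)) := cancel_right x (((u * x) * s) * x) ((u * x) * (s * x)) (e18.trans (congrArg₂ (· * ·) rfl (rfl).symm))
                have e20 : ((u * (x * s)) * x) = ((u * x) * (s * x)) := ((((((h4e1).trans (e2).symm).trans e13).trans (h2e2).symm).trans e15).trans e19)
                exact e20
              · rcases hDE s u (x * s) with ⟨h7d1, h7d2⟩ | ⟨h7e1, h7e2⟩
                · have e1 : (((s * x) * s) * u) = (s * (x * (s * u))) := lb s x u
                  have e2 : ((s * x) * s) = (s * (x * s)) := flex s x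
                  have e3 : (s * (x * s)) = ((s * x) * s) := (e2).symm
                  have e4 : ((s * (x * s)) * u) = (((s * x) * s) * u) := congrArg₂ (· * ·) e3 rfl
                  have e5 : (s * (x * (s * u))) = (s * ((x * s) * u)) := ((((e1).symm).trans (e4).symm).trans h7d2)
                  have e6 : (x * (s * u)) = ((x * s) * u) := cancel_left s (x * (s * u)) ((x * s) * u) (e5.trans (congrArg₂ (· * ·) (rfl).symm rfl))
                  have e7 : ((x * s) * u) = (x * (s * u)) := (e6).symm
                  have e8 : ((u * s) * x) = (u * (s * x)) := assoc_s13 x s u e7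
                  have e9 : (u * (x * s)) = ((u * x) * s) := ((((h1e2).symm).trans e8).trans (h1e1).symm)
                  have e10 : ((u * (x * s)) * x) = (((u * x) * s) * x) := congrArg₂ (· * ·) e9 rfl
                  have e11 : (((x * (s * u)) * x) * s) = (x * ((s * u) * (x * s))) := lb x (s * u) s
                  have e12 : (s * ((u * s) * x)) = (s * (u * (x * s))) := congrArg₂ (· * ·) rfl h1e2
                  have e13 : (((x * s) * u) * s) = ((x * s) * (u * s)) := assoc_s13 s u (x * s) h7d1
                  have e14 : (((x * s) * u) * s) = (x * ((s * u) * s)) := bol x s u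
                  have e15 : ((s * u) * s) = (s * (u * s)) := flex s u
                  have e16 : (x * ((s * u) * s)) = (x * (s * (u * s))) := congrArg₂ (· * ·) rfl e15
                  have e17 : ((x * s) * (u * s)) = (x * (s * (u * s))) := ((((e13).symm).trans e14).trans e16)
                  have e18 : ((s * (u * s)) * x) = (s * ((u * s) * x)) := assoc_cyc2 x s (u * s) e17
                  have e19 : (((s * u) * s) * x) = ((s * (u * s)) * x) := congrArg₂ (· * ·) e15 rfl
                  have e20 : ((s * u) * (x * s)) = (((s * u) * s) * x) := ((((h7d1).trans (e12).symm).trans (e18).symm).trans (e19).symm)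
                  have e21 : (x * ((s * u) * (x * s))) = (x * (((s * u) * s) * x)) := congrArg₂ (· * ·) rfl e20
                  have e22 : ((s * (u * x)) * s) = (s * ((u * x) * s)) := flex s (u * x)
                  have e23 : (s * ((u * x) * s)) = (s * (u * (s * x))) := congrArg₂ (· * ·) rfl h1e1
                  have e24 : (((s * u) * s) * x) = (s * (u * (s * x))) := lb s u x
                  have e25 : ((s * (u * x)) * s) = (((s * u) * s) * x) := (((e22).trans e23).trans (e24).symm)
                  have e26 : (x * ((s * (u * x)) * s)) = (x * (((s * u) * s) * x)) := congrArg₂ (· * ·) rfl e25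
                  have e27 : (((x * s) * (u * x)) * s) = (x * ((s * (u * x)) * s)) := bol x s (u * x)
                  have e28 : (((x * (s * u)) * x) * s) = (((x * s) * (u * x)) * s) := ((((e11).trans e21).trans (e26).symm).trans (e27).symm)
                  have e29 : ((x * (s * u)) * x) = ((x * s) * (u * x)) := cancel_right s ((x * (s * u)) * x) ((x * s) * (u * x)) (e28.trans (congrArg₂ (· * ·) rfl (rfl).symm))
                  have e30 : ((x * (s * u)) * x) = (x * ((s * u) * x)) := flex x (s * u)
                  have e31 : ((s * u) * x) = (s * (u * x)) := assoc_cyc2 x s u e7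
                  have e32 : (s * (u * x)) = ((s * u) * x) := (e31).symm
                  have e33 : (x * (s * (u * x))) = (x * ((s * u) * x)) := congrArg₂ (· * ·) rfl e32
                  have e34 : ((x * s) * (u * x)) = (x * (s * (u * x))) := ((((e29).symm).trans e30).trans (e33).symm)
                  have e35 : (((u * x) * s) * x) = ((u * x) * (s * x)) := assoc_s13 x s (u * x) e34
                  have e36 : ((u * (x * s)) * x) = ((u * x) * (s * x)) := ((e10).trans e35)
                  exact e36
                · rcases hDE x u (x * s) with ⟨h8d1, h8d2⟩ | ⟨h8e1, h8e2⟩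
                  · have e1 : ((u * (x * s)) * x) = (u * ((x * s) * x)) := assoc_s13 x (x * s) u h8d2
                    have e2 : (u * (s * x)) = ((u * x) * s) := (h1e1).symm
                    have e3 : ((u * (s * x)) * x) = (((u * x) * s) * x) := congrArg₂ (· * ·) e2 rfl
                    have e4 : ((x * s) * x) = (x * (s * x)) := flex x s
                    have e5 : (x * (s * x)) = ((x * s) * x) := (e4).symm
                    have e6 : ((x * (s * x)) * u) = (((x * s) * x) * u) := congrArg₂ (· * ·) e5 rfl
                    have e7 : (((x * s) * x) * u) = ((x * s) * (x * u)) := assoc_s12 x (x * s) u h8d2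
                    have e8 : ((x * ((s * x) * u)) * x) = (x * (((s * x) * u) * x)) := flex x ((s * x) * u)
                    have e9 : (((x * s) * x) * u) = (x * (s * (x * u))) := lb x s u
                    have e10 : ((x * s) * (x * u)) = (x * (s * (x * u))) := (((e7).symm).trans e9)
                    have e11 : ((s * (x * u)) * x) = (s * ((x * u) * x)) := assoc_cyc2 x s (x * u) e10
                    have e12 : (((s * x) * u) * x) = (s * ((x * u) * x)) := bol s x u
                    have e13 : ((s * (x * u)) * x) = (((s * x) * u) * x) := ((e11).trans (e12).symm)
                    have e14 : (x * ((s * (x * u)) * x)) = (x * (((s * x) * u) * x)) := congrArg₂ (· * ·) rfl e13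
                    have e15 : ((x * (s * (x * u))) * x) = (x * ((s * (x * u)) * x)) := flex x (s * (x * u))
                    have e16 : (x * (s * (x * u))) = ((x * s) * (x * u)) := (((e9).symm).trans e7)
                    have e17 : ((x * (s * (x * u))) * x) = (((x * s) * (x * u)) * x) := congrArg₂ (· * ·) e16 rfl
                    have e18 : ((x * ((s * x) * u)) * x) = (((x * s) * (x * u)) * x) := ((((e8).trans (e14).symm).trans (e15).symm).trans e17)
                    have e19 : (x * ((s * x) * u)) = ((x * s) * (x * u)) := cancel_right x (x * ((s * x) * u)) ((x * s) * (x * u)) (e18.trans (congrArg₂ (· * ·) rfl (rfl).symm))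
                    have e20 : ((x * (s * x)) * u) = (x * ((s * x) * u)) := (((e6).trans e7).trans (e19).symm)
                    have e21 : ((u * (s * x)) * x) = (u * ((s * x) * x)) := assoc_s13 x (s * x) u e20
                    have e22 : ((u * (x * s)) * x) = ((u * x) * (s * x)) := ((((((e1).trans (h4e2).symm).trans (h5e2).symm).trans (e3).symm).trans e21).trans (h2e1).symm)
                    exact e22
                  · have e1 : (u * (x * s)) = ((u * s) * x) := (h1e2).symm
                    have e2 : ((u * (x * s)) * x) = (((u * s) * x) * x) := congrArg₂ (· * ·) e1 rfl
                    have e3 : (((u * s) * x) * x) = ((u * s) * (x * x)) := ralt (u * s) x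
                    have e4 : ((x * x) * s) = (x * (x * s)) := lalt x s
                    have e5 : (x * (x * s)) = ((x * x) * s) := (e4).symm
                    have e6 : ((x * (x * s)) * u) = (((x * x) * s) * u) := congrArg₂ (· * ·) e5 rfl
                    have e7 : (((s * x) * s) * u) = (s * (x * (s * u))) := lb s x u
                    have e8 : ((s * x) * s) = (s * (x * s)) := flex s x
                    have e9 : (s * (x * s)) = ((s * x) * s) := (e8).symm
                    have e10 : ((s * (x * s)) * u) = (((s * x) * s) * u) := congrArg₂ (· * ·) e9 rfl
                    have e11 : (s * (x * (s * u))) = (s * (u * (x * s))) := ((((e7).symm).trans (e10).symm).trans h7e2)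
                    have e12 : (x * (s * u)) = (u * (x * s)) := cancel_left s (x * (s * u)) (u * (x * s)) (e11.trans (congrArg₂ (· * ·) (rfl).symm rfl))
                    have e13 : (u * (x * s)) = (x * (s * u)) := (e12).symm
                    have e14 : (x * (u * (x * s))) = (x * (x * (s * u))) := congrArg₂ (· * ·) rfl e13
                    have e15 : ((x * x) * (s * u)) = (x * (x * (s * u))) := lalt x (s * u)
                    have e16 : (((x * x) * s) * u) = ((x * x) * (s * u)) := (((((e6).symm).trans h8e2).trans e14).trans (e15).symm)
                    have e17 : ((u * s) * (x * x)) = (u * (s * (x * x))) := assoc_s13 (x * x) s u e16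
                    have e18 : ((u * x) * x) = (u * (x * x)) := ralt u x
                    have e19 : (((u * x) * x) * s) = ((u * (x * x)) * s) := congrArg₂ (· * ·) e18 rfl
                    have e20 : ((u * (x * s)) * x) = ((u * x) * (s * x)) := ((((((e2).trans e3).trans e17).trans (h3e2).symm).trans (e19).symm).trans h5e1)
                    exact e20
  intro x y z
  have key := T2 (x * y) (x⁻¹ * z) x
  rw [lip'] at key
  rw [key, lb]
  have hzx : x * ((x⁻¹ * z) * x) = z * x := by
    have hf := flex x (x⁻¹ * z)
    rw [lip'] at hf
    exact hf.symm
  rw [hzx]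
end
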